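/- Let n ≥ 1 and for 0 ≤ j ≤ n−1 let A_j be the 3×3 real matrix with rows (t_j, 0, 0), (−s_j/2, 1/10, 0), (c_j/2, 0, 1/10), where s_j² + c_j² ≤ 1 and t_j ≥ 1. Let v, w ∈ ℝ³ lie in the cone 𝒞 = {(u₁,u₂,u₃) : 2|u₁| ≥ √(u₂² + u₃²)} with v₁ ≠ 0 and w₁ ≠ 0, and set B_n = A_{n−1}⋯A_1A_0. Then (B_n v)₁ ≠ 0, (B_n w)₁ ≠ 0, and for i = 2, 3 one has |(B_n v)_i/(B_n v)₁ − (B_n w)_i/(B_n w)₁| = (10^n · t₀t₁⋯t_{n−1})^{−1} · |v_i/v₁ − w_i/w₁| ≤ 4·10^{−n}. -/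

import Mathlib

open Matrix

/-- `matProd A n = A (n-1) * ⋯ * A 1 * A 0`, with `matProd A 0 = 1`. -/
def matProd (A : ℕ → Matrix (Fin 3) (Fin 3) ℝ) : ℕ → Matrix (Fin 3) (Fin 3) ℝ
  | 0 => 1
  | n + 1 => A n * matProd A n

lemma matProd_succ_mulVec (A : ℕ → Matrix (Fin 3) (Fin 3) ℝ) (n : ℕ) (u : Fin 3 → ℝ) :
    (matProd A (n+1)).mulVec u = (A n).mulVec ((matProd A n).mulVec u) := by
  simp [matProd, Matrix.mulVec_mulVec]

lemma mulVec_form (a b g : ℝ) (u : Fin 3 → ℝ) :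
    (!![a, 0, 0; b, 1/10, 0; g, 0, 1/10] : Matrix (Fin 3) (Fin 3) ℝ).mulVec u
      = ![a * u 0, b * u 0 + u 1 / 10, g * u 0 + u 2 / 10] := by
  funext i
  fin_cases i <;>
    simp [Matrix.mulVec, dotProduct, Fin.sum_univ_three] <;> ring

lemma comp0 (A : ℕ → Matrix (Fin 3) (Fin 3) ℝ) (t s c : ℕ → ℝ) :
    ∀ n, (∀ j < n, A j = !![t j, 0, 0; -(s j)/2, 1/10, 0; (c j)/2, 0, 1/10]) →
    ∀ u : Fin 3 → ℝ,
      (matProd A n).mulVec u 0 = (∏ j ∈ Finset.range n, t j) * u 0 := by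
  intro n
  induction n with
  | zero => intro _ u; simp [matProd]
  | succ n ih =>
    intro hA u
    rw [matProd_succ_mulVec, hA n (Nat.lt_succ_self n), mulVec_form]
    have := ih (fun j hj => hA j (hj.trans (Nat.lt_succ_self n))) u
    simp only [Matrix.cons_val_zero]
    rw [this, Finset.prod_range_succ]
    ring

lemma slope_eq (A : ℕ → Matrix (Fin 3) (Fin 3) ℝ) (t s c : ℕ → ℝ)
    (v w : Fin 3 → ℝ) (hv0 : v 0 ≠ 0) (hw0 : w 0 ≠ 0) :
    ∀ n, (∀ j < n, A j = !![t j, 0, 0; -(s j)/2, 1/10, 0; (c j)/2, 0, 1/10]) →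
    (∀ j < n, 1 ≤ t j) →
    ∀ i : Fin 3, i ≠ 0 →
      (matProd A n).mulVec v i / (matProd A n).mulVec v 0 -
        (matProd A n).mulVec w i / (matProd A n).mulVec w 0
      = (10 ^ n * ∏ j ∈ Finset.range n, t j)⁻¹ * (v i / v 0 - w i / w 0) := by
  intro n
  induction n with
  | zero => intro _ _ i hi; simp [matProd]
  | succ n ih =>
    intro hA ht i hi
    have hA' : ∀ j < n, A j = !![t j, 0, 0; -(s j)/2, 1/10, 0; (c j)/2, 0, 1/10] :=
      fun j hj => hA j (hj.trans (Nat.lt_succ_self n))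
    have ht' : ∀ j < n, 1 ≤ t j := fun j hj => ht j (hj.trans (Nat.lt_succ_self n))
    have hPpos : 0 < ∏ j ∈ Finset.range n, t j :=
      Finset.prod_pos fun j hj => lt_of_lt_of_le one_pos (ht' j (Finset.mem_range.mp hj))
    have htn : (1:ℝ) ≤ t n := ht n (Nat.lt_succ_self n)
    have htn0 : t n ≠ 0 := by linarith
    have hpv0 : (matProd A n).mulVec v 0 = (∏ j ∈ Finset.range n, t j) * v 0 :=
      comp0 A t s c n hA' v
    have hpw0 : (matProd A n).mulVec w 0 = (∏ j ∈ Finset.range n, t j) * w 0 :=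
      comp0 A t s c n hA' w
    have hpv0ne : (matProd A n).mulVec v 0 ≠ 0 := by
      rw [hpv0]; exact mul_ne_zero hPpos.ne' hv0
    have hpw0ne : (matProd A n).mulVec w 0 ≠ 0 := by
      rw [hpw0]; exact mul_ne_zero hPpos.ne' hw0
    have ihi := ih hA' ht' i hi
    have key : ∀ (sc a a' b b' : ℝ), a ≠ 0 → a' ≠ 0 →
        (sc * a + b/10)/(t n * a) - (sc * a' + b'/10)/(t n * a')
          = (10 * t n)⁻¹ * (b/a - b'/a') := by
      intro sc a a' b b' ha ha'
      field_simp
      ring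
    rw [matProd_succ_mulVec, matProd_succ_mulVec, hA n (Nat.lt_succ_self n), mulVec_form,
      mulVec_form]
    have h10 : (10:ℝ) ^ n ≠ 0 := by positivity
    fin_cases i
    · exact absurd rfl hi
    · simp only [Fin.mk_one] at ihi ⊢
      simp only [Matrix.cons_val_one, Matrix.head_cons, Matrix.cons_val_zero]
      rw [key (-(s n)/2) _ _ _ _ hpv0ne hpw0ne]
      rw [ihi, Finset.prod_range_succ, pow_succ]
      simp only [mul_inv]
      ring
    · simp only [show (⟨2, by norm_num⟩ : Fin 3) = (2 : Fin 3) from rfl] at ihi ⊢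
      simp only [Matrix.cons_val_two, Matrix.tail_cons, Matrix.head_cons, Matrix.cons_val_zero]
      rw [key ((c n)/2) _ _ _ _ hpv0ne hpw0ne]
      rw [ihi, Finset.prod_range_succ, pow_succ]
      simp only [mul_inv]
      ring

lemma slope_bound (u : Fin 3 → ℝ)
    (hu : Real.sqrt ((u 1) ^ 2 + (u 2) ^ 2) ≤ 2 * |u 0|)
    (hu0 : u 0 ≠ 0) (i : Fin 3) (hi : i ≠ 0) : |u i / u 0| ≤ 2 := by
  have h0 : 0 < |u 0| := abs_pos.mpr hu0
  have hle : |u i| ≤ 2 * |u 0| := by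
    fin_cases i
    · exact absurd rfl hi
    · calc |u 1| = Real.sqrt ((u 1) ^ 2) := (Real.sqrt_sq_eq_abs _).symm
        _ ≤ Real.sqrt ((u 1) ^ 2 + (u 2) ^ 2) :=
            Real.sqrt_le_sqrt (by nlinarith [sq_nonneg (u 2)])
        _ ≤ 2 * |u 0| := hu
    · calc |u 2| = Real.sqrt ((u 2) ^ 2) := (Real.sqrt_sq_eq_abs _).symm
        _ ≤ Real.sqrt ((u 1) ^ 2 + (u 2) ^ 2) :=
            Real.sqrt_le_sqrt (by nlinarith [sq_nonneg (u 1)])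
        _ ≤ 2 * |u 0| := hu
  rw [abs_div, div_le_iff₀ h0]
  linarith

theorem cone_slopes_converge (n : ℕ) (hn : 1 ≤ n)
    (A : ℕ → Matrix (Fin 3) (Fin 3) ℝ) (t s c : ℕ → ℝ)
    (hA : ∀ j < n, A j = !![t j, 0, 0; -(s j)/2, 1/10, 0; (c j)/2, 0, 1/10])
    (hsc : ∀ j < n, (s j) ^ 2 + (c j) ^ 2 ≤ 1)
    (ht : ∀ j < n, 1 ≤ t j)
    (v w : Fin 3 → ℝ)
    (hv : Real.sqrt ((v 1) ^ 2 + (v 2) ^ 2) ≤ 2 * |v 0|)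
    (hw : Real.sqrt ((w 1) ^ 2 + (w 2) ^ 2) ≤ 2 * |w 0|)
    (hv0 : v 0 ≠ 0) (hw0 : w 0 ≠ 0) :
    ((matProd A n).mulVec v) 0 ≠ 0 ∧
    ((matProd A n).mulVec w) 0 ≠ 0 ∧
    ∀ i : Fin 3, i ≠ 0 →
      |((matProd A n).mulVec v) i / ((matProd A n).mulVec v) 0 -
        ((matProd A n).mulVec w) i / ((matProd A n).mulVec w) 0|
        = (10 ^ n * ∏ j ∈ Finset.range n, t j)⁻¹ * |v i / v 0 - w i / w 0| ∧
      |((matProd A n).mulVec v) i / ((matProd A n).mulVec v) 0 -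
        ((matProd A n).mulVec w) i / ((matProd A n).mulVec w) 0|
        ≤ 4 / 10 ^ n := by
  have hP1 : (1:ℝ) ≤ ∏ j ∈ Finset.range n, t j := by
    calc (1:ℝ) = ∏ j ∈ Finset.range n, 1 := by simp
      _ ≤ ∏ j ∈ Finset.range n, t j :=
        Finset.prod_le_prod (by intros; norm_num) (fun j hj => ht j (Finset.mem_range.mp hj))
  have hPpos : 0 < ∏ j ∈ Finset.range n, t j := lt_of_lt_of_le one_pos hP1
  have hfpos : (0:ℝ) < 10 ^ n * ∏ j ∈ Finset.range n, t j := by positivity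
  have hv0' : (matProd A n).mulVec v 0 ≠ 0 := by
    rw [comp0 A t s c n hA v]; exact mul_ne_zero hPpos.ne' hv0
  have hw0' : (matProd A n).mulVec w 0 ≠ 0 := by
    rw [comp0 A t s c n hA w]; exact mul_ne_zero hPpos.ne' hw0
  refine ⟨hv0', hw0', fun i hi => ?_⟩
  have heq := slope_eq A t s c v w hv0 hw0 n hA ht i hi
  have habs : |((matProd A n).mulVec v) i / ((matProd A n).mulVec v) 0 -
        ((matProd A n).mulVec w) i / ((matProd A n).mulVec w) 0|
      = (10 ^ n * ∏ j ∈ Finset.range n, t j)⁻¹ * |v i / v 0 - w i / w 0| := by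
    rw [heq, abs_mul, abs_of_pos (inv_pos.mpr hfpos)]
  refine ⟨habs, ?_⟩
  rw [habs]
  have hd : |v i / v 0 - w i / w 0| ≤ 4 := by
    have h1 := slope_bound v hv hv0 i hi
    have h2 := slope_bound w hw hw0 i hi
    calc |v i / v 0 - w i / w 0| ≤ |v i / v 0| + |w i / w 0| := abs_sub _ _
      _ ≤ 4 := by linarith
  have hinv : (10 ^ n * ∏ j ∈ Finset.range n, t j)⁻¹ ≤ ((10:ℝ) ^ n)⁻¹ := by
    apply inv_anti₀ (by positivity)
    nlinarith [pow_pos (show (0:ℝ) < 10 by norm_num) n]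
  calc (10 ^ n * ∏ j ∈ Finset.range n, t j)⁻¹ * |v i / v 0 - w i / w 0|
      ≤ ((10:ℝ) ^ n)⁻¹ * 4 := by
        apply mul_le_mul hinv hd (abs_nonneg _) (by positivity)
    _ = 4 / 10 ^ n := by ring
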